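/- arXiv:2201.00198 — 3 statements merged into one kernel-verified Lean document; each statement's English description precedes it below -/
import Mathlib

section
/- Let B = Σ_{i,j=1}^n a_{ij}(x_i − x_j)² be a real quadratic form with a_{ij} = a_{ji} ∈ ℝ. Let G = (V,E) be the graph with V = {1,…,n} and E = {{i,j} : a_{ij} ≠ 0 and i ≠ j}, and let H = (V,E(H)) be the subgraph with E(H) = {{i,j} ∈ E : a_{ij} > 0}. Then for any spanning forest T of H, p ≤ |E(T)| ≤ |E(H)| ≤ p + ℓ, where p is the positive index of inertia of B (the number of positive eigenvalues, with multiplicity, of the symmetric matrix representing B) and ℓ = ℓ(G) := |E| − |V| + c(G), c(G) being the number of connected components of G. -/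
open Matrix Polynomial

section NodalDefs

variable {V : Type*}

/-- The product of the signature over consecutive pairs of a list of vertices. -/
noncomputable def chainSign (σ : V → V → ℝ) (l : List V) : ℝ :=
  ((l.zip l.tail).map fun p => σ p.1 p.2).prod

/-- One step of a strong nodal domain walk. -/
def SWalkStep (G : SimpleGraph V) (σ : V → V → ℝ) (f : V → ℝ) (u v : V) : Prop :=
  G.Adj u v ∧ 0 < f u * σ u v * f v

/-- `x` and `y` are connected by a strong nodal domain walk (S-walk). -/
def SConn (G : SimpleGraph V) (σ : V → V → ℝ) (f : V → ℝ) (x y : V) : Prop :=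
  ∃ l : List V, 2 ≤ l.length ∧ l.Chain' (SWalkStep G σ f) ∧
    l.head? = some x ∧ l.getLast? = some y

/-- The strong nodal domain (as a vertex set) containing the non-zero `w`. -/
def strongClass (G : SimpleGraph V) (σ : V → V → ℝ) (f : V → ℝ) (w : V) : Set V :=
  {x | f x ≠ 0 ∧ (x = w ∨ SConn G σ f x w)}

/-- The set of strong nodal domains (as vertex sets) of `f`. -/
def strongDomains (G : SimpleGraph V) (σ : V → V → ℝ) (f : V → ℝ) : Set (Set V) :=
  {D | ∃ w, f w ≠ 0 ∧ D = strongClass G σ f w}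

/-- 𝔖(f): the number of strong nodal domains of `f`. -/
noncomputable def numStrong (G : SimpleGraph V) (σ : V → V → ℝ) (f : V → ℝ) : ℕ :=
  Nat.card (strongDomains G σ f)

/-- A list of vertices is a weak nodal domain walk (W-walk). -/
def IsWWalk (G : SimpleGraph V) (σ : V → V → ℝ) (f : V → ℝ) (l : List V) : Prop :=
  2 ≤ l.length ∧ l.Chain' G.Adj ∧
    ∀ i j : Fin l.length, i < j → f (l.get i) ≠ 0 → f (l.get j) ≠ 0 →
      (∀ k : Fin l.length, i < k → k < j → f (l.get k) = 0) →
      0 < f (l.get i) * chainSign σ ((l.drop i.val).take (j.val - i.val + 1)) * f (l.get j)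

/-- `x` and `y` are connected by a weak nodal domain walk (W-walk). -/
def WConn (G : SimpleGraph V) (σ : V → V → ℝ) (f : V → ℝ) (x y : V) : Prop :=
  ∃ l : List V, IsWWalk G σ f l ∧ l.head? = some x ∧ l.getLast? = some y

/-- The weak nodal domain (as a vertex set) associated with the class of the non-zero `w`:
the class `W` of `w` together with all vertices having a W-walk to some vertex of `W`. -/
def weakClass (G : SimpleGraph V) (σ : V → V → ℝ) (f : V → ℝ) (w : V) : Set V :=
  {x | (f x ≠ 0 ∧ (x = w ∨ WConn G σ f x w)) ∨
       ∃ u, f u ≠ 0 ∧ (u = w ∨ WConn G σ f u w) ∧ WConn G σ f x u}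

/-- The set of weak nodal domains (as vertex sets) of `f`. -/
def weakDomains (G : SimpleGraph V) (σ : V → V → ℝ) (f : V → ℝ) : Set (Set V) :=
  {D | ∃ w, f w ≠ 0 ∧ D = weakClass G σ f w}

/-- 𝔚(f): the number of weak nodal domains of `f`. -/
noncomputable def numWeak (G : SimpleGraph V) (σ : V → V → ℝ) (f : V → ℝ) : ℕ :=
  Nat.card (weakDomains G σ f)

/-- `σ` is a valid signature on `G`: symmetric and ±1-valued on edges. -/
def IsSignature (G : SimpleGraph V) (σ : V → V → ℝ) : Prop :=
  (∀ x y, σ x y = σ y x) ∧ ∀ x y, G.Adj x y → σ x y = 1 ∨ σ x y = -1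

/-- `M` is compatible with the signed graph `(G, σ)`: `(G, σ)` is the induced
signed graph of `M`. -/
def Compatible (M : Matrix V V ℝ) (G : SimpleGraph V) (σ : V → V → ℝ) : Prop :=
  (∀ x y, G.Adj x y ↔ x ≠ y ∧ M x y ≠ 0) ∧
  (∀ x y, G.Adj x y → σ x y = -(M x y / |M x y|))

/-- A signed graph is balanced if every cycle has positive sign. -/
def IsBalanced (G : SimpleGraph V) (σ : V → V → ℝ) : Prop :=
  ∀ (x : V) (p : G.Walk x x), p.IsCycle → chainSign σ p.support = 1

/-- A signed graph is antibalanced if its negation is balanced. -/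
def IsAntibalanced (G : SimpleGraph V) (σ : V → V → ℝ) : Prop :=
  IsBalanced G (fun x y => -(σ x y))

/-- ℓ(G) = |E| - |V| + c(G), the cyclomatic number of `G`. -/
noncomputable def cyclomatic (G : SimpleGraph V) : ℕ :=
  Nat.card G.edgeSet + Nat.card G.ConnectedComponent - Nat.card V

/-- The subgraph of `G` on the edges `{x,y}` with `f x * σ x y * f y > 0`. -/
def posSubgraph (G : SimpleGraph V) (σ : V → V → ℝ) (f : V → ℝ) : SimpleGraph V where
  Adj x y := G.Adj x y ∧ 0 < f x * σ x y * f y ∧ 0 < f y * σ y x * f x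
  symm := ⟨fun _ _ h => ⟨h.1.symm, h.2.2, h.2.1⟩⟩
  loopless := ⟨fun x h => G.loopless.irrefl x h.1⟩

/-- `x` is tree-like: removing `x` and its incident edges increases the number of
connected components by `d_x - 1`. -/
def IsTreeLike (G : SimpleGraph V) (x : V) : Prop :=
  Nat.card (SimpleGraph.induce {y | y ≠ x} G).ConnectedComponent + 1
    = Nat.card G.ConnectedComponent + Nat.card (G.neighborSet x)

/-- The Fiedler zero set of `f` on `G`. -/
def fiedlerZeroSet (G : SimpleGraph V) (f : V → ℝ) : Set V :=
  {x | f x = 0 ∧ ((∀ y, G.Adj x y → f y = 0) ∨ ¬ IsTreeLike G x)}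

end NodalDefs


section Aux

open Module

lemma auxWalk {V : Type*} {G : SimpleGraph V} {x : V → ℝ}
    (h : ∀ a b, G.Adj a b → x a = x b) {u v : V} (w : G.Walk u v) : x u = x v := by
  induction w with
  | nil => rfl
  | cons hadj _ ih => exact (h _ _ hadj).trans ih

lemma auxA {n : ℕ} (Q : Matrix (Fin n) (Fin n) ℝ) (W W' : Submodule ℝ (Fin n → ℝ))
    (hW : ∀ x ∈ W, x ≠ 0 → 0 < x ⬝ᵥ Q.mulVec x)
    (hW' : ∀ x ∈ W', x ⬝ᵥ Q.mulVec x ≤ 0) :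
    Module.finrank ℝ W + Module.finrank ℝ W' ≤ n := by
  have hdisj : W ⊓ W' = ⊥ := by
    rw [Submodule.eq_bot_iff]
    intro x hx
    by_contra hxne
    exact absurd (hW x hx.1 hxne) (not_lt.2 (hW' x hx.2))
  have h1 := Submodule.finrank_sup_add_finrank_inf_eq W W'
  rw [hdisj, finrank_bot, add_zero] at h1
  have h2 : Module.finrank ℝ ↥(W ⊔ W') ≤ Module.finrank ℝ (Fin n → ℝ) :=
    Submodule.finrank_le _
  rw [Module.finrank_pi, Fintype.card_fin] at h2
  omega

lemma auxKer {n : ℕ} {ι : Type*} [Fintype ι] (φ : (Fin n → ℝ) →ₗ[ℝ] (ι → ℝ)) :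
    n ≤ Module.finrank ℝ (LinearMap.ker φ) + Fintype.card ι := by
  have h := LinearMap.finrank_range_add_finrank_ker φ
  rw [Module.finrank_pi] at h
  have h2 : Module.finrank ℝ (LinearMap.range φ) ≤ Fintype.card ι := by
    simpa [Module.finrank_pi] using Submodule.finrank_le (LinearMap.range φ)
  simp at h
  omega

lemma auxCharConj {m : Type*} [Fintype m] [DecidableEq m]
    (P A B : Matrix m m ℝ) (hPB : P * B = 1) (hBP : B * P = 1) :
    (P * A * B).charpoly = A.charpoly := by
  unfold Matrix.charpoly
  have key : charmatrix (P * A * B) =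
      P.map C * charmatrix A * B.map C := by
    unfold charmatrix
    rw [Matrix.mul_sub, Matrix.sub_mul]
    congr 1
    · have hcomm : P.map (C : ℝ →+* ℝ[X]) * Matrix.scalar m (X : ℝ[X]) =
          Matrix.scalar m (X : ℝ[X]) * P.map C :=
        (Matrix.scalar_commute (X : ℝ[X]) (fun r => Commute.all _ _) _).symm
      rw [Matrix.mul_assoc, ← Matrix.mul_assoc (P.map C), hcomm, Matrix.mul_assoc,
        ← Matrix.map_mul, hPB]
      simp
    · simp [RingHom.mapMatrix_apply, ← Matrix.map_mul]
  rw [key, det_mul, det_mul, mul_comm, ← mul_assoc, ← det_mul, ← Matrix.map_mul, hBP]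
  simp

lemma auxCharDiag {m : Type*} [Fintype m] [DecidableEq m] (d : m → ℝ) :
    (Matrix.diagonal d).charpoly = ∏ i, (X - C (d i)) := by
  unfold Matrix.charpoly
  have : charmatrix (Matrix.diagonal d) = Matrix.diagonal fun i => X - C (d i) := by
    ext i j
    by_cases h : i = j <;> simp [h, charmatrix_apply, Matrix.diagonal_apply]
  rw [this, det_diagonal]

lemma auxCount {n : ℕ} (μ ev : Fin n → ℝ)
    (h : (∏ i, (X - C (μ i)) : ℝ[X]) = ∏ i, (X - C (ev i))) :
    Nat.card {i : Fin n | 0 < μ i} = Nat.card {i : Fin n | 0 < ev i} := by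
  classical
  have hroots : (Finset.univ.val.map μ) = (Finset.univ.val.map ev) := by
    have h1 := Polynomial.roots_multiset_prod_X_sub_C (Finset.univ.val.map μ)
    have h2 := Polynomial.roots_multiset_prod_X_sub_C (Finset.univ.val.map ev)
    rw [Multiset.map_map] at h1 h2
    rw [← h1, ← h2]
    congr 1
  have key : ∀ f : Fin n → ℝ, Nat.card {i : Fin n | 0 < f i}
      = Multiset.countP (fun x => 0 < x) (Finset.univ.val.map f) := by
    intro f
    rw [Multiset.countP_map]
    rw [Nat.card_eq_fintype_card, Fintype.card_subtype]
    rfl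
  rw [key, key, hroots]

lemma auxSpec0 {n : ℕ} (Q : Matrix (Fin n) (Fin n) ℝ) (hA : Q.IsHermitian) :
    ∀ y : Fin n → ℝ,
      ((hA.eigenvectorUnitary : Matrix (Fin n) (Fin n) ℝ).mulVec y) ⬝ᵥ
        Q.mulVec ((hA.eigenvectorUnitary : Matrix (Fin n) (Fin n) ℝ).mulVec y)
      = ∑ i, hA.eigenvalues i * y i ^ 2 := by
  classical
  intro y
  set U : Matrix (Fin n) (Fin n) ℝ := (hA.eigenvectorUnitary : Matrix (Fin n) (Fin n) ℝ) with hUdef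
  set ev := hA.eigenvalues with hevdef
  have hU2 : star U * U = 1 := Matrix.mem_unitaryGroup_iff'.mp hA.eigenvectorUnitary.2
  have hspec : Q = U * Matrix.diagonal ev * star U := by
    simpa using hA.spectral_theorem
  have h1 : Q.mulVec (U.mulVec y) = U.mulVec ((Matrix.diagonal ev).mulVec y) := by
    rw [Matrix.mulVec_mulVec, Matrix.mulVec_mulVec, hspec, Matrix.mul_assoc, hU2,
      Matrix.mul_one]
  rw [h1]
  have h2 : (U.mulVec y) ⬝ᵥ (U.mulVec ((Matrix.diagonal ev).mulVec y))
      = y ⬝ᵥ ((Matrix.diagonal ev).mulVec y) := by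
    rw [Matrix.dotProduct_mulVec, ← Matrix.mulVec_transpose]
    have hT : Uᵀ = star U := by
      ext i j
      simp [Matrix.conjTranspose_apply]
    rw [Matrix.mulVec_mulVec, hT, hU2, Matrix.one_mulVec]
  rw [h2]
  simp only [dotProduct, Matrix.mulVec_diagonal]
  congr 1
  ext i
  ring

noncomputable def extLM {n : ℕ} (P : Fin n → Prop) [DecidablePred P] :
    ({i // P i} → ℝ) →ₗ[ℝ] (Fin n → ℝ) where
  toFun c i := if h : P i then c ⟨i, h⟩ else 0
  map_add' c d := by ext i; by_cases h : P i <;> simp [h]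
  map_smul' r c := by ext i; by_cases h : P i <;> simp [h]

lemma extLM_apply {n : ℕ} (P : Fin n → Prop) [DecidablePred P] (c : {i // P i} → ℝ) (i : Fin n) :
    extLM P c i = if h : P i then c ⟨i, h⟩ else 0 := rfl

lemma extLM_inj {n : ℕ} (P : Fin n → Prop) [DecidablePred P] :
    Function.Injective (extLM P) := by
  intro c d h
  ext ⟨i, hi⟩
  have := congrFun h i
  simpa [extLM_apply, hi] using this

lemma auxSpec {n : ℕ} (Q : Matrix (Fin n) (Fin n) ℝ) (hA : Q.IsHermitian) :
    ∃ Wp Wm : Submodule ℝ (Fin n → ℝ),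
      Module.finrank ℝ Wp = Nat.card {i : Fin n | 0 < hA.eigenvalues i} ∧
      Module.finrank ℝ Wp + Module.finrank ℝ Wm = n ∧
      (∀ x ∈ Wp, x ≠ 0 → 0 < x ⬝ᵥ Q.mulVec x) ∧
      (∀ x ∈ Wm, x ⬝ᵥ Q.mulVec x ≤ 0) := by
  classical
  set U : Matrix (Fin n) (Fin n) ℝ := (hA.eigenvectorUnitary : Matrix (Fin n) (Fin n) ℝ) with hUdef
  set ev := hA.eigenvalues with hevdef
  have hU2 : star U * U = 1 := Matrix.mem_unitaryGroup_iff'.mp hA.eigenvectorUnitary.2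
  have hUinj : Function.Injective U.mulVecLin := by
    intro a b hab
    have : (star U).mulVec (U.mulVec a) = (star U).mulVec (U.mulVec b) := by
      simpa using congrArg (star U).mulVec hab
    simpa [Matrix.mulVec_mulVec, hU2] using this
  set P : Fin n → Prop := fun i => 0 < ev i with hPdef
  set ψp := U.mulVecLin.comp (extLM P) with hψp
  set ψm := U.mulVecLin.comp (extLM (fun i => ¬ P i)) with hψm
  have hinjp : Function.Injective ⇑ψp := by
    rw [hψp]; rw [LinearMap.coe_comp]; exact hUinj.comp (extLM_inj P)
  have hinjm : Function.Injective ⇑ψm := by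
    rw [hψm]; rw [LinearMap.coe_comp]; exact hUinj.comp (extLM_inj _)
  refine ⟨LinearMap.range ψp, LinearMap.range ψm, ?_, ?_, ?_, ?_⟩
  · rw [LinearMap.finrank_range_of_inj hinjp]
    rw [Module.finrank_pi, Nat.card_eq_fintype_card]
    rfl
  · rw [LinearMap.finrank_range_of_inj hinjp, LinearMap.finrank_range_of_inj hinjm,
      Module.finrank_pi, Module.finrank_pi]
    rw [Fintype.card_subtype_compl]
    have : Fintype.card {i // P i} ≤ Fintype.card (Fin n) := Fintype.card_subtype_le _
    simp only [Fintype.card_fin] at this ⊢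
    omega
  · rintro x ⟨c, rfl⟩ hne
    have hc : c ≠ 0 := fun h => hne (by simp [hψp, h])
    have := auxSpec0 Q hA (extLM P c)
    rw [hψp]
    simp only [LinearMap.comp_apply, Matrix.mulVecLin_apply]
    rw [this]
    obtain ⟨j, hj⟩ := Function.ne_iff.mp hc
    apply Finset.sum_pos'
    · intro i _
      rw [extLM_apply]
      by_cases h : P i
      · simp only [dif_pos h]
        positivity
      · simp [h]
    · refine ⟨j.1, Finset.mem_univ _, ?_⟩
      rw [extLM_apply, dif_pos j.2]
      have : c ⟨j.1, j.2⟩ ≠ 0 := by simpa using hj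
      have hevj : 0 < ev j.1 := j.2
      positivity
  · rintro x ⟨c, rfl⟩
    have := auxSpec0 Q hA (extLM (fun i => ¬ P i) c)
    rw [hψm]
    simp only [LinearMap.comp_apply, Matrix.mulVecLin_apply]
    rw [this]
    apply Finset.sum_nonpos
    intro i _
    rw [extLM_apply]
    by_cases h : ¬ P i
    · simp only [dif_pos h]
      have : ev i ≤ 0 := le_of_not_gt h
      have h2 : (0:ℝ) ≤ c ⟨i, h⟩ ^ 2 := sq_nonneg _
      exact mul_nonpos_of_nonpos_of_nonneg this h2
    · simp [h]

lemma auxCharEv {n : ℕ} (Q : Matrix (Fin n) (Fin n) ℝ) (hA : Q.IsHermitian) :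
    Q.charpoly = ∏ i, (X - C (hA.eigenvalues i)) := by
  classical
  set U : Matrix (Fin n) (Fin n) ℝ := (hA.eigenvectorUnitary : Matrix (Fin n) (Fin n) ℝ)
  have hU1 : U * star U = 1 := Matrix.mem_unitaryGroup_iff.mp hA.eigenvectorUnitary.2
  have hU2 : star U * U = 1 := Matrix.mem_unitaryGroup_iff'.mp hA.eigenvectorUnitary.2
  have hspec : Q = U * Matrix.diagonal hA.eigenvalues * star U := by
    simpa using hA.spectral_theorem
  calc Q.charpoly = (U * Matrix.diagonal hA.eigenvalues * star U).charpoly := by rw [← hspec]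
  _ = (Matrix.diagonal hA.eigenvalues).charpoly := auxCharConj _ _ _ hU1 hU2
  _ = ∏ i, (X - C (hA.eigenvalues i)) := auxCharDiag _

noncomputable def eFst {n : ℕ} (e : Sym2 (Fin n)) : Fin n := (Quot.out e).1

noncomputable def eSnd {n : ℕ} (e : Sym2 (Fin n)) : Fin n := (Quot.out e).2

lemma eMk {n : ℕ} (e : Sym2 (Fin n)) : s(eFst e, eSnd e) = e := by
  rw [eFst, eSnd]
  exact (Prod.mk.eta (p := Quot.out e)) ▸ Quot.out_eq e

noncomputable def edgeMap {n : ℕ} (E' : Set (Sym2 (Fin n))) :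
    (Fin n → ℝ) →ₗ[ℝ] (E' → ℝ) where
  toFun x e := x (eFst (e : Sym2 (Fin n))) - x (eSnd (e : Sym2 (Fin n)))
  map_add' c d := by ext e; simp; ring
  map_smul' r c := by ext e; simp; ring

lemma auxEdge {n : ℕ} (E' : Set (Sym2 (Fin n))) (x : Fin n → ℝ)
    (hx : x ∈ LinearMap.ker (edgeMap E')) {i j : Fin n} (hij : s(i,j) ∈ E') :
    x i = x j := by
  have h0 := congrFun (LinearMap.mem_ker.mp hx) ⟨s(i,j), hij⟩
  simp only [edgeMap, LinearMap.coe_mk, AddHom.coe_mk, Pi.zero_apply] at h0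
  have hout : s(eFst (s(i,j) : Sym2 (Fin n)), eSnd (s(i,j) : Sym2 (Fin n))) = s(i,j) := eMk _
  rcases Sym2.eq_iff.mp hout with ⟨h1, h2⟩ | ⟨h1, h2⟩
  · rw [h1, h2] at h0; linarith
  · rw [h1, h2] at h0; linarith

end Aux

/-- for B = Σ a_ij (x_i - x_j)², p ≤ |E(T)| ≤ |E(H)| ≤ p + ℓ(G) for any
spanning forest T of the positive-part subgraph H. -/
theorem stmt_17 (n : ℕ) (a : Matrix (Fin n) (Fin n) ℝ) (ha : ∀ i j, a i j = a j i)
    (Q : Matrix (Fin n) (Fin n) ℝ) (hQsymm : Q.IsSymm)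
    (hQ : ∀ g : Fin n → ℝ, g ⬝ᵥ Q.mulVec g = ∑ i, ∑ j, a i j * (g i - g j) ^ 2)
    (μ : Fin n → ℝ) (hchar : Q.charpoly = ∏ i, (Polynomial.X - Polynomial.C (μ i)))
    (p : ℕ) (hp : p = Nat.card {i : Fin n | 0 < μ i})
    (G : SimpleGraph (Fin n)) (hG : ∀ i j, G.Adj i j ↔ i ≠ j ∧ a i j ≠ 0)
    (H : SimpleGraph (Fin n)) (hH : ∀ i j, H.Adj i j ↔ i ≠ j ∧ 0 < a i j)
    (T : SimpleGraph (Fin n)) (hTH : T ≤ H) (hT : T.IsAcyclic)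
    (hTspan : ∀ x y, H.Reachable x y → T.Reachable x y) :
    p ≤ Nat.card T.edgeSet ∧ Nat.card T.edgeSet ≤ Nat.card H.edgeSet ∧
      Nat.card H.edgeSet ≤ p + cyclomatic G := by
  classical
  have hA : Q.IsHermitian := by
    ext i j
    simp only [Matrix.conjTranspose_apply, star_trivial]
    exact (congrFun (congrFun hQsymm j) i).symm
  obtain ⟨Wp, Wm, hWp, hsum, hpos, hneg⟩ := auxSpec Q hA
  have hpfin : p = Module.finrank ℝ Wp := by
    rw [hp, hWp]
    exact auxCount μ hA.eigenvalues (by rw [← hchar, auxCharEv Q hA])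
  -- instances
  have hfinT : Fintype ↥T.edgeSet := Fintype.ofFinite _
  -- Part 1 : p ≤ Nat.card T.edgeSet
  have part1 : p ≤ Nat.card T.edgeSet := by
    set W' := LinearMap.ker (edgeMap T.edgeSet) with hW'
    have hdim : n ≤ Module.finrank ℝ W' + Fintype.card ↥T.edgeSet := auxKer _
    have hconstT : ∀ x ∈ W', ∀ i j : Fin n, T.Reachable i j → x i = x j := by
      intro x hx i j hr
      obtain ⟨w⟩ := hr
      exact auxWalk (fun a b hadj => auxEdge _ x hx (T.mem_edgeSet.mpr hadj)) w
    have hneg' : ∀ x ∈ W', x ⬝ᵥ Q.mulVec x ≤ 0 := by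
      intro x hx
      rw [hQ x]
      apply Finset.sum_nonpos
      intro i _
      apply Finset.sum_nonpos
      intro j _
      by_cases hij : i = j
      · subst hij; simp
      by_cases hpos' : 0 < a i j
      · have hadj : H.Adj i j := (hH i j).mpr ⟨hij, hpos'⟩
        have : x i = x j := hconstT x hx i j (hTspan i j hadj.reachable)
        rw [this]; simp
      · have h1 : a i j ≤ 0 := le_of_not_gt hpos'
        exact mul_nonpos_of_nonpos_of_nonneg h1 (sq_nonneg _)
    have hle := auxA Q Wp W' hpos hneg'
    rw [Nat.card_eq_fintype_card]
    omega
  -- Part 2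
  have hHG : H ≤ G := by
    intro i j hadj
    obtain ⟨h1, h2⟩ := (hH i j).mp hadj
    exact (hG i j).mpr ⟨h1, ne_of_gt h2⟩
  have part2 : Nat.card T.edgeSet ≤ Nat.card H.edgeSet := by
    rw [Nat.card_coe_set_eq, Nat.card_coe_set_eq]
    exact Set.ncard_le_ncard (SimpleGraph.edgeSet_mono hTH) (Set.toFinite _)
  -- Part 3
  set E' : Set (Sym2 (Fin n)) := G.edgeSet \ H.edgeSet with hE'
  have hfinE' : Fintype ↥E' := Fintype.ofFinite _
  set W₀ := LinearMap.ker (edgeMap E') with hW₀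
  have hker : n ≤ Module.finrank ℝ W₀ + Fintype.card ↥E' := auxKer _
  set Z := LinearMap.range (LinearMap.funLeft ℝ ℝ G.connectedComponentMk) with hZ
  have hfinCC : Fintype G.ConnectedComponent := Fintype.ofFinite _
  have hsurj : Function.Surjective G.connectedComponentMk := fun c => c.exists_rep
  have hZrank : Module.finrank ℝ Z = Nat.card G.ConnectedComponent := by
    rw [hZ, LinearMap.finrank_range_of_inj
      (LinearMap.funLeft_injective_of_surjective ℝ ℝ _ hsurj),
      Module.finrank_pi, Nat.card_eq_fintype_card]
  have hZmem : ∀ x ∈ Z, ∀ i j : Fin n, G.Reachable i j → x i = x j := by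
    rintro x ⟨g, rfl⟩ i j hr
    simp only [LinearMap.funLeft_apply]
    rw [SimpleGraph.ConnectedComponent.sound hr]
  have hZle : Z ≤ W₀ := by
    intro x hx
    rw [hW₀, LinearMap.mem_ker]
    ext e
    have hout : s(eFst (e : Sym2 (Fin n)), eSnd (e : Sym2 (Fin n))) = (e : Sym2 (Fin n)) := eMk _
    have hEg : (e : Sym2 (Fin n)) ∈ G.edgeSet := e.2.1
    rw [← hout] at hEg
    have hadj : G.Adj (eFst (e : Sym2 (Fin n))) (eSnd (e : Sym2 (Fin n))) :=
      (SimpleGraph.mem_edgeSet _).mp hEg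
    have := hZmem x hx _ _ hadj.reachable
    simp only [edgeMap, LinearMap.coe_mk, AddHom.coe_mk, Pi.zero_apply]
    rw [this]; ring
  obtain ⟨Z', hZ'⟩ := Submodule.exists_isCompl Z
  set S := Z' ⊓ W₀ with hS
  have hsup : Z ⊔ S = W₀ := by
    rw [hS, ← sup_inf_assoc_of_le _ hZle, hZ'.sup_eq_top, top_inf_eq]
  have hdisj : Z ⊓ S = ⊥ := by
    rw [Submodule.eq_bot_iff]
    intro x hx
    have : x ∈ Z ⊓ Z' := ⟨hx.1, hx.2.1⟩
    rwa [hZ'.inf_eq_bot, Submodule.mem_bot] at this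
  have hrankW₀ : Module.finrank ℝ Z + Module.finrank ℝ S = Module.finrank ℝ W₀ := by
    have := Submodule.finrank_sup_add_finrank_inf_eq Z S
    rw [hsup, hdisj, finrank_bot, add_zero] at this
    omega
  have hSpos : ∀ x ∈ S, x ≠ 0 → 0 < x ⬝ᵥ Q.mulVec x := by
    intro x hxS hxne
    have hxW₀ : x ∈ W₀ := hxS.2
    have hnegeq : ∀ i j : Fin n, a i j < 0 → x i = x j := by
      intro i j hij
      rcases eq_or_ne i j with rfl | hne
      · rfl
      have hmem : s(i,j) ∈ E' := by
        constructor
        · exact (SimpleGraph.mem_edgeSet _).mpr ((hG i j).mpr ⟨hne, ne_of_lt hij⟩)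
        · intro hmem
          exact absurd ((hH i j).mp ((SimpleGraph.mem_edgeSet _).mp hmem)).2 (not_lt.mpr hij.le)
      exact auxEdge _ x hxW₀ hmem
    have hterms : ∀ i j : Fin n, 0 ≤ a i j * (x i - x j) ^ 2 := by
      intro i j
      rcases lt_trichotomy (a i j) 0 with h | h | h
      · rw [hnegeq i j h]; simp
      · rw [h]; simp
      · positivity
    have hqnn : 0 ≤ x ⬝ᵥ Q.mulVec x := by
      rw [hQ x]
      exact Finset.sum_nonneg fun i _ => Finset.sum_nonneg fun j _ => hterms i j
    rcases hqnn.lt_or_eq with h | h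
    · exact h
    exfalso
    have hzero : ∀ i j : Fin n, a i j * (x i - x j) ^ 2 = 0 := by
      have h' : ∑ i, ∑ j, a i j * (x i - x j) ^ 2 = 0 := by rw [← hQ x, ← h]
      have houter := (Finset.sum_eq_zero_iff_of_nonneg
        (fun i _ => Finset.sum_nonneg fun j _ => hterms i j)).mp h'
      intro i j
      exact (Finset.sum_eq_zero_iff_of_nonneg (fun j _ => hterms i j)).mp
        (houter i (Finset.mem_univ i)) j (Finset.mem_univ j)
    have hedge : ∀ i j : Fin n, G.Adj i j → x i = x j := by
      intro i j hadj
      obtain ⟨hne, hne0⟩ := (hG i j).mp hadj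
      rcases lt_trichotomy (a i j) 0 with h' | h' | h'
      · exact hnegeq i j h'
      · exact absurd h' hne0
      · have := hzero i j
        have h2 : (x i - x j) ^ 2 = 0 := by
          rcases mul_eq_zero.mp this with hc | hc
          · exact absurd hc (ne_of_gt h')
          · exact hc
        have := pow_eq_zero_iff (n := 2) (by norm_num) |>.mp h2
        linarith
    have hxZ : x ∈ Z := by
      refine ⟨SimpleGraph.ConnectedComponent.lift x
        (fun v w pw _ => auxWalk hedge pw), ?_⟩
      ext v
      simp [LinearMap.funLeft_apply]
    have : x ∈ Z ⊓ S := ⟨hxZ, hxS⟩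
    rw [hdisj, Submodule.mem_bot] at this
    exact hxne this
  have hSle := auxA Q S Wm hSpos hneg
  have hcardE' : Nat.card ↥E' + Nat.card ↥H.edgeSet = Nat.card ↥G.edgeSet := by
    rw [Nat.card_coe_set_eq, Nat.card_coe_set_eq, Nat.card_coe_set_eq]
    exact Set.ncard_diff_add_ncard_of_subset (SimpleGraph.edgeSet_mono hHG) (Set.toFinite _)
  have part3 : Nat.card H.edgeSet ≤ p + cyclomatic G := by
    rw [cyclomatic]
    have hNV : Nat.card (Fin n) = n := by simp
    rw [hNV]
    have hE'card : Fintype.card ↥E' = Nat.card ↥E' := (Nat.card_eq_fintype_card).symm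
    omega
  exact ⟨part1, part2, part3⟩
end

section
/- Let M = (M_{ij}) be an n×n real symmetric matrix and let G = (V,E) be the graph with V = {1,…,n} and E = {{i,j} : i ≠ j and M_{ij} ≠ 0}. If λ is an eigenvalue of M admitting an eigenvector that is nonzero at every vertex, then the multiplicity r of λ satisfies c ≤ r ≤ c + ℓ, where c is the number of connected components of G and ℓ = ℓ(G) := |E| − |V| + c. -/
open Matrix Polynomial

namespace Stmt18Aux

variable {n : ℕ} (G : SimpleGraph (Fin n)) (M : Matrix (Fin n) (Fin n) ℝ) (f : Fin n → ℝ)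

/-- Oriented edges of `G`. -/
def ES : Type := {p : Fin n × Fin n // p.1 < p.2 ∧ G.Adj p.1 p.2}

noncomputable instance : Fintype (ES G) := by
  unfold ES
  classical
  infer_instance

/-- The (transposed) incidence matrix. -/
def P : Matrix (ES G) (Fin n) ℝ :=
  fun e k => (if k = e.1.1 then 1 else 0) - (if k = e.1.2 then 1 else 0)

lemma P_mulVec (x : Fin n → ℝ) (e : ES G) :
    (P G).mulVec x e = x e.1.1 - x e.1.2 := by
  classical
  simp [P, Matrix.mulVec, dotProduct, sub_mul, Finset.sum_sub_distrib,
    ite_mul, one_mul, zero_mul]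

/-- The weighted difference map. -/
noncomputable def Psi : (Fin n → ℝ) →ₗ[ℝ] (ES G → ℝ) where
  toFun g := fun e => M e.1.1 e.1.2 * (f e.1.2 * g e.1.1 - f e.1.1 * g e.1.2)
  map_add' g h := by funext e; simp only [Pi.add_apply]; ring
  map_smul' a g := by funext e; simp only [Pi.smul_apply, smul_eq_mul, RingHom.id_apply]; ring

/-- Pointwise division by `f`. -/
noncomputable def delta : (Fin n → ℝ) →ₗ[ℝ] (Fin n → ℝ) where
  toFun g := fun i => g i * (f i)⁻¹
  map_add' g h := by funext i; simp [add_mul]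
  map_smul' a g := by funext i; simp [smul_eq_mul, mul_assoc]

/-- Multiplication of a component function by `f`. -/
noncomputable def Phi : (G.ConnectedComponent → ℝ) →ₗ[ℝ] (Fin n → ℝ) where
  toFun a := fun i => a (G.connectedComponentMk i) * f i
  map_add' g h := by funext i; simp [add_mul]
  map_smul' a g := by funext i; simp [smul_eq_mul, mul_assoc]

lemma ker_P : LinearMap.ker (P G).mulVecLin
    = LinearMap.range (LinearMap.funLeft ℝ ℝ G.connectedComponentMk) := by
  ext x
  simp only [LinearMap.mem_ker, LinearMap.mem_range]
  constructor
  · intro hx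
    have hadj : ∀ i j, G.Adj i j → x i = x j := by
      have key : ∀ e : ES G, x e.1.1 = x e.1.2 := by
        intro e
        have := congrFun hx e
        rw [Matrix.mulVecLin_apply, P_mulVec] at this
        simpa [sub_eq_zero] using this
      intro i j hij
      rcases lt_trichotomy i j with h | h | h
      · exact key ⟨(i, j), h, hij⟩
      · rw [h]
      · exact (key ⟨(j, i), h, hij.symm⟩).symm
    have hwalk : ∀ (v w : Fin n) (p : G.Walk v w), x v = x w := by
      intro v w p
      induction p with
      | nil => rfl
      | cons h p ih => exact (hadj _ _ h).trans ih
    refine ⟨SimpleGraph.ConnectedComponent.lift x (fun v w p _ => hwalk v w p), ?_⟩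
    · funext i; rfl
  · rintro ⟨a, rfl⟩
    funext e
    rw [Matrix.mulVecLin_apply, P_mulVec]
    simp only [LinearMap.funLeft_apply]
    rw [SimpleGraph.ConnectedComponent.connectedComponentMk_eq_of_adj e.2.2]
    simp


lemma card_edges : Nat.card (ES G) = Nat.card G.edgeSet := by
  classical
  apply Nat.card_eq_of_bijective (fun e : ES G => (⟨s(e.val.1, e.val.2), e.2.2⟩ : G.edgeSet))
  constructor
  · rintro ⟨⟨a1, a2⟩, ha⟩ ⟨⟨b1, b2⟩, hb⟩ h
    have h2 : s(a1, a2) = s(b1, b2) := by simpa using congrArg Subtype.val h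
    rw [Sym2.eq_iff] at h2
    rcases h2 with ⟨rfl, rfl⟩ | ⟨rfl, rfl⟩
    · rfl
    · exact absurd (ha.1.trans hb.1) (lt_irrefl _)
  · rintro ⟨z, hz⟩
    revert hz
    refine Sym2.ind (fun a b => ?_) z
    intro hz
    rw [SimpleGraph.mem_edgeSet] at hz
    rcases lt_or_gt_of_ne hz.ne with h | h
    · exact ⟨⟨(a, b), h, hz⟩, rfl⟩
    · exact ⟨⟨(b, a), h, hz.symm⟩, Subtype.ext (Sym2.eq_swap)⟩

lemma key_sum (hM : M.IsSymm) (hG : ∀ i j, G.Adj i j ↔ i ≠ j ∧ M i j ≠ 0)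
    (lam : ℝ) (heig : M.mulVec f = lam • f) (g : Fin n → ℝ) (hg : M.mulVec g = lam • g)
    (i : Fin n) :
    ∑ e : ES G, (P G) e i * (Psi G M f g e) = 0 := by
  classical
  set v : Fin n → Fin n → ℝ := fun a b => M a b * (f b * g a - f a * g b) with hv
  set t : Fin n × Fin n → ℝ := fun p =>
    ((if i = p.1 then (1:ℝ) else 0) - (if i = p.2 then 1 else 0)) * v p.1 p.2 with htd
  set S : Finset (Fin n × Fin n) := Finset.univ.filter (fun p => p.1 < p.2 ∧ G.Adj p.1 p.2)
    with hS
  set S' : Finset (Fin n × Fin n) := Finset.univ.filter (fun p => p.1 < p.2) with hS'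
  set S'' : Finset (Fin n × Fin n) := Finset.univ.filter (fun p => p.2 < p.1) with hS''
  have hfsum : ∀ k, ∑ j, M k j * f j = lam * f k := by
    intro k
    have := congrFun heig k
    simpa [Matrix.mulVec, dotProduct] using this
  have hgsum : ∀ k, ∑ j, M k j * g j = lam * g k := by
    intro k
    have := congrFun hg k
    simpa [Matrix.mulVec, dotProduct] using this
  -- step A: identify the sum over the subtype with a sum over S
  have hA : ∑ e : ES G, (P G) e i * (Psi G M f g e) = ∑ p ∈ S, t p := by
    rw [Finset.sum_subtype (p := fun p : Fin n × Fin n => p.1 < p.2 ∧ G.Adj p.1 p.2) (F := (inferInstance : Fintype (ES G))) S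
      (fun x => by simp [hS]) t]
    rfl
  -- step B: extend to all increasing pairs
  have hB : ∑ p ∈ S, t p = ∑ p ∈ S', t p := by
    apply Finset.sum_subset
    · intro p hp
      simp only [hS, hS', Finset.mem_filter] at hp ⊢
      exact ⟨hp.1, hp.2.1⟩
    · intro p hp1 hp2
      simp only [hS, hS', Finset.mem_filter, Finset.mem_univ, true_and, not_and] at hp1 hp2
      have hnadj : ¬ G.Adj p.1 p.2 := hp2 hp1
      have hM0 : M p.1 p.2 = 0 := by
        by_contra hM0
        exact hnadj ((hG p.1 p.2).2 ⟨ne_of_lt hp1, hM0⟩)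
      simp [htd, hv, hM0]
  -- step C: swap
  have htswap : ∀ a b : Fin n, t (b, a) = t (a, b) := by
    intro a b
    simp only [htd, hv]
    rw [hM.apply]
    ring
  have hC : ∑ p ∈ S'', t p = ∑ p ∈ S', t p := by
    apply Finset.sum_nbij' (i := Prod.swap) (j := Prod.swap)
    · intro p hp
      simp only [hS', hS'', Finset.mem_filter, Finset.mem_univ, true_and] at hp ⊢
      exact hp
    · intro p hp
      simp only [hS', hS'', Finset.mem_filter, Finset.mem_univ, true_and] at hp ⊢
      exact hp
    · intro p _; exact Prod.swap_swap p
    · intro p _; exact Prod.swap_swap p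
    · intro p _
      exact htswap p.2 p.1
  -- step E: decompose the full sum
  have hE : ∑ p : Fin n × Fin n, t p = ∑ p ∈ S', t p + ∑ p ∈ S'', t p := by
    rw [← Finset.sum_filter_add_sum_filter_not Finset.univ (fun p => p.1 < p.2) t]
    congr 1
    apply (Finset.sum_subset ?_ ?_).symm
    · intro p hp
      simp only [hS'', Finset.mem_filter, Finset.mem_univ, true_and] at hp ⊢
      exact not_lt_of_gt hp
    · intro p hp1 hp2
      simp only [hS'', Finset.mem_filter, Finset.mem_univ, true_and, not_lt] at hp1 hp2
      have : p.1 = p.2 := le_antisymm hp2 hp1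
      simp [htd, hv, this]
  -- step F: the full sum vanishes
  have hF : ∑ p : Fin n × Fin n, t p = 0 := by
    rw [Fintype.sum_prod_type]
    have hexp : ∀ a b : Fin n, t (a, b)
        = (if i = a then (1:ℝ) else 0) * v a b - (if i = b then (1:ℝ) else 0) * v a b := by
      intro a b; simp only [htd]; ring
    simp only [hexp]
    have h1 : ∀ a : Fin n, ∑ b : Fin n,
        ((if i = a then (1:ℝ) else 0) * v a b - (if i = b then 1 else 0) * v a b)
        = (if i = a then (1:ℝ) else 0) * (∑ b : Fin n, v a b)
          - ∑ b : Fin n, (if i = b then (1:ℝ) else 0) * v a b := by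
      intro a
      rw [Finset.sum_sub_distrib, Finset.mul_sum]
    simp only [h1]
    rw [Finset.sum_sub_distrib]
    have h2 : ∑ a : Fin n, (if i = a then (1:ℝ) else 0) * (∑ b : Fin n, v a b)
        = ∑ b : Fin n, v i b := by
      simp only [ite_mul, one_mul, zero_mul]
      rw [Finset.sum_ite_eq]
      simp
    have h3 : ∑ a : Fin n, ∑ b : Fin n, (if i = b then (1:ℝ) else 0) * v a b
        = ∑ a : Fin n, v a i := by
      rw [Finset.sum_comm]
      simp only [← Finset.mul_sum]
      simp only [ite_mul, one_mul, zero_mul]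
      rw [Finset.sum_ite_eq]
      simp
    rw [h2, h3]
    have hrow : ∑ b : Fin n, v i b = 0 := by
      have hh : ∑ b : Fin n, v i b
          = g i * (∑ b : Fin n, M i b * f b) - f i * (∑ b : Fin n, M i b * g b) := by
        rw [Finset.mul_sum, Finset.mul_sum, ← Finset.sum_sub_distrib]
        exact Finset.sum_congr rfl fun b _ => by simp only [hv]; ring
      rw [hh, hfsum, hgsum]; ring
    have hcol : ∑ a : Fin n, v a i = 0 := by
      have hh : ∑ a : Fin n, v a i
          = f i * (∑ a : Fin n, M i a * g a) - g i * (∑ a : Fin n, M i a * f a) := by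
        rw [Finset.mul_sum, Finset.mul_sum, ← Finset.sum_sub_distrib]
        refine Finset.sum_congr rfl fun a _ => ?_
        simp only [hv]
        rw [hM.apply]
        ring
      rw [hh, hfsum, hgsum]; ring
    rw [hrow, hcol]
    ring
  have hS'0 : ∑ p ∈ S', t p = 0 := by linarith [hE, hC, hF]
  rw [hA, hB, hS'0]

end Stmt18Aux

open Stmt18Aux


/-- if an eigenvalue has an eigenvector nonzero at every vertex then its
multiplicity r satisfies c ≤ r ≤ c + ℓ(G). -/
theorem stmt_18 (n : ℕ) (M : Matrix (Fin n) (Fin n) ℝ) (hM : M.IsSymm)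
    (G : SimpleGraph (Fin n)) (hG : ∀ i j, G.Adj i j ↔ i ≠ j ∧ M i j ≠ 0)
    (lam : ℝ) (f : Fin n → ℝ) (hf : f ≠ 0) (heig : M.mulVec f = lam • f)
    (hnz : ∀ x, f x ≠ 0)
    (r : ℕ) (hr : r = Module.finrank ℝ
      (LinearMap.ker (M - lam • (1 : Matrix (Fin n) (Fin n) ℝ)).mulVecLin))
    (c : ℕ) (hc : c = Nat.card G.ConnectedComponent) :
    c ≤ r ∧ r ≤ c + cyclomatic G := by
  classical
  set K := LinearMap.ker (M - lam • (1 : Matrix (Fin n) (Fin n) ℝ)).mulVecLin with hK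
  have hmem : ∀ g : Fin n → ℝ, g ∈ K ↔ M.mulVec g = lam • g := by
    intro g
    rw [hK, LinearMap.mem_ker, Matrix.mulVecLin_apply, Matrix.sub_mulVec,
      Matrix.smul_mulVec, Matrix.one_mulVec, sub_eq_zero]
  clear_value K
  have hmksurj : Function.Surjective G.connectedComponentMk :=
    fun cc => SimpleGraph.ConnectedComponent.ind (fun v => ⟨v, rfl⟩) cc
  have hCCfin : Finite G.ConnectedComponent := Finite.of_surjective _ hmksurj
  have hCCfintype : Fintype G.ConnectedComponent := Fintype.ofFinite _
  have hcCard : c = Fintype.card G.ConnectedComponent := by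
    rw [hc, Nat.card_eq_fintype_card]
  -- pointwise eigen equation
  have hfs : ∀ k, ∑ j, M k j * f j = lam * f k := by
    intro k
    have := congrFun heig k
    simpa [Matrix.mulVec, dotProduct] using this
  -- LOWER BOUND
  have hPhiinj : Function.Injective (Phi G f) := by
    intro a b hab
    funext cc
    induction cc using SimpleGraph.ConnectedComponent.ind with
    | _ v =>
      have h1 := congrFun hab v
      simp only [Phi, LinearMap.coe_mk, AddHom.coe_mk] at h1
      exact mul_right_cancel₀ (hnz v) h1
  have hPhirange : LinearMap.range (Phi G f) ≤ K := by
    rintro - ⟨a, rfl⟩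
    rw [hmem]
    funext i
    show ∑ j, M i j * (a (G.connectedComponentMk j) * f j)
        = lam * (a (G.connectedComponentMk i) * f i)
    have hterm : ∀ j, M i j * (a (G.connectedComponentMk j) * f j)
        = a (G.connectedComponentMk i) * (M i j * f j) := by
      intro j
      by_cases hij : M i j = 0
      · simp [hij]
      · by_cases hij2 : i = j
        · subst hij2; ring
        · have hadj : G.Adj i j := (hG i j).2 ⟨hij2, hij⟩
          rw [SimpleGraph.ConnectedComponent.connectedComponentMk_eq_of_adj hadj]
          ring
    rw [Finset.sum_congr rfl (fun j _ => hterm j), ← Finset.mul_sum, hfs i]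
    ring
  have hlow : c ≤ r := by
    have h1 : Module.finrank ℝ (LinearMap.range (Phi G f)) ≤ Module.finrank ℝ K :=
      Submodule.finrank_mono hPhirange
    rw [LinearMap.finrank_range_of_inj hPhiinj, Module.finrank_fintype_fun_eq_card] at h1
    rw [hr, hcCard]
    exact h1
  -- UPPER BOUND
  have kPdim : Module.finrank ℝ (LinearMap.ker (P G).mulVecLin) = c := by
    rw [ker_P, LinearMap.finrank_range_of_inj
      (LinearMap.funLeft_injective_of_surjective ℝ ℝ _ hmksurj),
      Module.finrank_fintype_fun_eq_card, hcCard]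
  set ΨK : K →ₗ[ℝ] (ES G → ℝ) := (Psi G M f) ∘ₗ K.subtype with hΨK
  have hrangeΨ : LinearMap.range ΨK ≤ LinearMap.ker (P G)ᵀ.mulVecLin := by
    rintro - ⟨⟨g, hgK⟩, rfl⟩
    rw [LinearMap.mem_ker]
    funext i
    rw [Matrix.mulVecLin_apply]
    have h1 : ((P G)ᵀ.mulVec (Psi G M f g)) i
        = ∑ e : ES G, (P G) e i * (Psi G M f g e) := by
      simp [Matrix.mulVec, dotProduct, Matrix.transpose_apply]
    show ((P G)ᵀ.mulVec (Psi G M f ((K.subtype) ⟨g, hgK⟩))) i = 0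
    rw [show (K.subtype) ⟨g, hgK⟩ = g from rfl, h1,
      key_sum G M f hM hG lam heig g ((hmem g).1 hgK)]
  have hkerΨ : Module.finrank ℝ (LinearMap.ker ΨK) ≤ c := by
    set_option synthInstance.maxHeartbeats 1000000 in
    set δ' : LinearMap.ker ΨK →ₗ[ℝ] (Fin n → ℝ) :=
      (delta f) ∘ₗ (K.subtype ∘ₗ (LinearMap.ker ΨK).subtype) with hδ'
    have hinj : Function.Injective δ' := by
      intro x y hxy
      apply Subtype.ext; apply Subtype.ext
      funext i
      have h1 := congrFun hxy i
      simp only [hδ', delta, LinearMap.coe_comp, Function.comp_apply, LinearMap.coe_mk,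
        AddHom.coe_mk, Submodule.coe_subtype] at h1
      exact mul_right_cancel₀ (inv_ne_zero (hnz i)) h1
    have hrange2 : LinearMap.range δ' ≤ LinearMap.ker (P G).mulVecLin := by
      rintro - ⟨⟨⟨g, hgK⟩, hgΨ⟩, rfl⟩
      rw [LinearMap.mem_ker]
      funext e
      rw [Matrix.mulVecLin_apply]
      have h0 : Psi G M f g = 0 := LinearMap.mem_ker.1 hgΨ
      have h0e := congrFun h0 e
      simp only [Psi, LinearMap.coe_mk, AddHom.coe_mk, Pi.zero_apply] at h0e
      have hMne : M e.val.1 e.val.2 ≠ 0 := ((hG _ _).1 e.2.2).2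
      have heq : f e.val.2 * g e.val.1 = f e.val.1 * g e.val.2 := by
        rcases mul_eq_zero.1 h0e with h | h
        · exact absurd h hMne
        · linarith [h]
      rw [P_mulVec]
      have hfa := hnz e.val.1
      have hfb := hnz e.val.2
      simp only [hδ', delta, LinearMap.coe_comp, Function.comp_apply, LinearMap.coe_mk,
        AddHom.coe_mk, Submodule.coe_subtype, Pi.zero_apply]
      rw [sub_eq_zero]
      field_simp
      linear_combination heq
    calc Module.finrank ℝ (LinearMap.ker ΨK)
        = Module.finrank ℝ (LinearMap.range δ') := (LinearMap.finrank_range_of_inj hinj).symm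
      _ ≤ Module.finrank ℝ (LinearMap.ker (P G).mulVecLin) := Submodule.finrank_mono hrange2
      _ = c := kPdim
  have hrn : Module.finrank ℝ (LinearMap.range ΨK) + Module.finrank ℝ (LinearMap.ker ΨK)
      = Module.finrank ℝ K := LinearMap.finrank_range_add_finrank_ker ΨK
  have hub : r ≤ Module.finrank ℝ (LinearMap.ker (P G)ᵀ.mulVecLin) + c := by
    have h1 := Submodule.finrank_mono hrangeΨ
    rw [hr, ← hrn]
    omega
  -- dimension counts
  have h1 : (P G).rank + Module.finrank ℝ (LinearMap.ker (P G).mulVecLin) = n := by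
    have := LinearMap.finrank_range_add_finrank_ker (P G).mulVecLin
    rwa [Module.finrank_fintype_fun_eq_card, Fintype.card_fin] at this
  have h2 : (P G).rank + Module.finrank ℝ (LinearMap.ker (P G)ᵀ.mulVecLin)
      = Fintype.card (ES G) := by
    have h3 := LinearMap.finrank_range_add_finrank_ker (P G)ᵀ.mulVecLin
    rw [Module.finrank_fintype_fun_eq_card] at h3
    rw [← Matrix.rank_transpose (P G)]
    exact h3
  have hE : Nat.card G.edgeSet = Fintype.card (ES G) := by
    rw [← card_edges G, Nat.card_eq_fintype_card]
  have hcyc : cyclomatic G = Nat.card G.edgeSet + c - n := by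
    rw [cyclomatic, ← hc]
    simp [Nat.card_eq_fintype_card]
  refine ⟨hlow, ?_⟩
  rw [kPdim] at h1
  omega
end

section
/- Let M be an n×n real symmetric matrix with induced signed graph Γ = (G,σ), G = (V,E), and let λ_k be the k-th eigenvalue of M with λ_{k−1} < λ_k, with eigenvector f_k. Then 𝔖(f_k) ≥ k + v_l − 1 − n − z_l + z_r, where v_l is the number of leaves of G (vertices of degree 1), z_l = |{x ∈ V : d_x = 1 and f_k(x) = 0}|, and z_r = |{x ∈ V : d_x = 1, f_k(x) ≠ 0, and f_k(x') = 0 for the unique vertex x' ∼ x}|. -/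
open Matrix Polynomial

lemma charpoly_diagonal {n : ℕ} (d : Fin n → ℝ) :
    (Matrix.diagonal d).charpoly = ∏ i, (X - C (d i)) := by
  have h : charmatrix (Matrix.diagonal d) = Matrix.diagonal (fun i => (X : ℝ[X]) - C (d i)) := by
    ext i j
    rcases eq_or_ne i j with rfl | hij
    · rw [charmatrix_apply_eq, Matrix.diagonal_apply_eq, Matrix.diagonal_apply_eq]
    · rw [charmatrix_apply_ne _ _ _ hij, Matrix.diagonal_apply_ne _ hij,
        Matrix.diagonal_apply_ne _ hij, map_zero, neg_zero]
  rw [Matrix.charpoly, h, Matrix.det_diagonal]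

lemma herm_charpoly {n : ℕ} (M : Matrix (Fin n) (Fin n) ℝ) (hH : M.IsHermitian) :
    M.charpoly = ∏ i, (X - C (hH.eigenvalues i)) := by
  classical
  set U : Matrix (Fin n) (Fin n) ℝ := (hH.eigenvectorUnitary : Matrix (Fin n) (Fin n) ℝ)
  have hU1 : U * star U = 1 := (Matrix.mem_unitaryGroup_iff).mp hH.eigenvectorUnitary.2
  have hU2 : star U * U = 1 := (Matrix.mem_unitaryGroup_iff').mp hH.eigenvectorUnitary.2
  have hdiag : (Matrix.diagonal (RCLike.ofReal ∘ hH.eigenvalues) : Matrix (Fin n) (Fin n) ℝ)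
      = Matrix.diagonal hH.eigenvalues := by
    congr 1
  have hspec : M = U * Matrix.diagonal hH.eigenvalues * star U := by
    have := hH.spectral_theorem
    rw [hdiag] at this
    exact this
  -- charpoly invariance under conjugation
  have key : M.charpoly = (Matrix.diagonal hH.eigenvalues).charpoly := by
    set D := Matrix.diagonal hH.eigenvalues
    have hcm : charmatrix M = (C : ℝ →+* ℝ[X]).mapMatrix U *
        charmatrix D * (C : ℝ →+* ℝ[X]).mapMatrix (star U) := by
      rw [charmatrix, charmatrix, hspec]
      simp only [RingHom.mapMatrix_apply]
      rw [Matrix.mul_sub, Matrix.sub_mul]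
      congr 1
      · have hcomm : Commute (Matrix.scalar (Fin n) (X : ℝ[X])) (U.map (C : ℝ → ℝ[X])) :=
          Matrix.scalar_commute (X : ℝ[X]) (fun r => Commute.all _ _) _
        calc Matrix.scalar (Fin n) (X : ℝ[X])
            = Matrix.scalar (Fin n) (X : ℝ[X]) * (U.map C * (star U).map C) := by
              rw [← Matrix.map_mul, hU1]; simp
          _ = U.map ⇑C * Matrix.scalar (Fin n) (X : ℝ[X]) * (star U).map ⇑C := by
              rw [← Matrix.mul_assoc, hcomm.eq]
      · rw [← Matrix.map_mul, ← Matrix.map_mul]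
    rw [Matrix.charpoly, Matrix.charpoly, hcm, Matrix.det_mul, Matrix.det_mul]
    have hdet : (U.map (C : ℝ → ℝ[X])).det * ((star U).map (C : ℝ → ℝ[X])).det = 1 := by
      rw [mul_comm, ← Matrix.det_mul, ← Matrix.map_mul, hU2]
      simp
    calc (U.map ⇑C).det * (charmatrix D).det * ((star U).map ⇑C).det
        = (U.map ⇑C).det * ((star U).map ⇑C).det * (charmatrix D).det := by ring
      _ = (charmatrix D).det := by rw [hdet, one_mul]
  rw [key, charpoly_diagonal]


lemma sum_dotProduct' {m : ℕ} {ι : Type*} (s : Finset ι) (v : ι → (Fin m → ℝ)) (w : Fin m → ℝ) :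
    (∑ i ∈ s, v i) ⬝ᵥ w = ∑ i ∈ s, v i ⬝ᵥ w := by
  simp only [dotProduct, Finset.sum_apply, Finset.sum_mul]
  rw [Finset.sum_comm]

lemma dotProduct_sum' {m : ℕ} {ι : Type*} (s : Finset ι) (w : Fin m → ℝ) (v : ι → (Fin m → ℝ)) :
    w ⬝ᵥ (∑ i ∈ s, v i) = ∑ i ∈ s, w ⬝ᵥ v i := by
  simp only [dotProduct, Finset.sum_apply, Finset.mul_sum]
  rw [Finset.sum_comm]

lemma mulVec_sum' {m : ℕ} {ι : Type*} (s : Finset ι) (M : Matrix (Fin m) (Fin m) ℝ)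
    (v : ι → (Fin m → ℝ)) : M *ᵥ (∑ i ∈ s, v i) = ∑ i ∈ s, M *ᵥ v i := by
  rw [← Matrix.mulVecLin_apply, map_sum]
  simp [Matrix.mulVecLin_apply]

lemma li_of_dot {m : ℕ} {ι : Type*} [Fintype ι] [DecidableEq ι] (v : ι → (Fin m → ℝ))
    (h : ∀ i j, v i ⬝ᵥ v j = if i = j then 1 else 0) : LinearIndependent ℝ v := by
  rw [Fintype.linearIndependent_iff]
  intro g hg i
  have h2 := congrArg (fun w => w ⬝ᵥ v i) hg
  simp only [sum_dotProduct', smul_dotProduct, zero_dotProduct] at h2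
  rw [Finset.sum_congr rfl (fun j _ => by rw [h j i])] at h2
  simp only [smul_eq_mul, mul_ite, mul_one, mul_zero, Finset.sum_ite_eq',
    Finset.mem_univ, if_true] at h2
  exact h2

lemma count_lt_le {n : ℕ} (M : Matrix (Fin n) (Fin n) ℝ) (hH : M.IsHermitian)
    (μ : Fin n → ℝ)
    (hchar : M.charpoly = ∏ i, (X - C (μ i))) (lam : ℝ)
    (T : Finset (Fin n)) (hdiag : ∀ x ∈ T, lam ≤ M x x)
    (hoff : ∀ x ∈ T, ∀ y ∈ T, x ≠ y → M x y = 0) :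
    (Finset.univ.filter (fun j => μ j < lam)).card + T.card ≤ n := by
  classical
  set ν := hH.eigenvalues with hν
  -- multiset of roots
  have hroots : (Finset.univ.val.map μ) = (Finset.univ.val.map ν) := by
    have h1 : M.charpoly = ((Finset.univ.val.map μ).map (fun a => X - C a)).prod := by
      rw [hchar, Finset.prod]
      rw [Multiset.map_map]
      rfl
    have h2 : M.charpoly = ((Finset.univ.val.map ν).map (fun a => X - C a)).prod := by
      rw [herm_charpoly M hH, Finset.prod, Multiset.map_map]
      rfl
    have := congrArg Polynomial.roots (h1.symm.trans h2)
    rwa [Polynomial.roots_multiset_prod_X_sub_C, Polynomial.roots_multiset_prod_X_sub_C] at this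
  set S : Finset (Fin n) := Finset.univ.filter (fun j => ν j < lam) with hS
  have hcard : (Finset.univ.filter (fun j => μ j < lam)).card = S.card := by
    have := congrArg (Multiset.countP (fun r => r < lam)) hroots
    rwa [Multiset.countP_map, Multiset.countP_map] at this
  rw [hcard]
  -- now the dimension argument
  set uvec : Fin n → (Fin n → ℝ) := fun i => ⇑(hH.eigenvectorBasis i) with huvec
  have hdot : ∀ i j, uvec i ⬝ᵥ uvec j = if i = j then 1 else 0 := by
    intro i j
    have h3 := (orthonormal_iff_ite.mp hH.eigenvectorBasis.orthonormal) i j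
    simp only [PiLp.inner_apply, RCLike.inner_apply, conj_trivial] at h3
    rw [← h3]
    exact Finset.sum_congr rfl fun x _ => mul_comm _ _
  have hmv : ∀ i, M *ᵥ uvec i = ν i • uvec i := fun i => hH.mulVec_eigenvectorBasis i
  set U : Submodule ℝ (Fin n → ℝ) := Submodule.span ℝ (Set.range fun i : ↥S => uvec i) with hU
  set W : Submodule ℝ (Fin n → ℝ) :=
    Submodule.span ℝ (Set.range fun x : ↥T => (Pi.single (x : Fin n) (1:ℝ) : Fin n → ℝ)) with hW
  have hUli : LinearIndependent ℝ (fun i : ↥S => uvec i) := by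
    apply li_of_dot
    intro i j
    rw [hdot]
    rcases eq_or_ne i j with rfl | hne
    · rw [if_pos rfl, if_pos rfl]
    · rw [if_neg (fun h => hne (Subtype.ext h)), if_neg hne]
  have hWli : LinearIndependent ℝ (fun x : ↥T => (Pi.single (x : Fin n) (1:ℝ) : Fin n → ℝ)) := by
    apply li_of_dot
    intro i j
    rw [single_dotProduct, Pi.single_apply, one_mul]
    rcases eq_or_ne i j with rfl | hne
    · rw [if_pos rfl, if_pos rfl]
    · rw [if_neg (fun h => hne (Subtype.ext h)), if_neg hne]
  have hvdot : ∀ (c : ↥S → ℝ) (i : ↥S),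
      (∑ j : ↥S, c j • uvec ↑j) ⬝ᵥ uvec ↑i = c i := by
    intro c i
    rw [sum_dotProduct']
    have h1 : ∀ j : ↥S, (c j • uvec ↑j) ⬝ᵥ uvec ↑i = if j = i then c j else 0 := by
      intro j
      rw [smul_dotProduct, hdot, smul_eq_mul]
      rcases eq_or_ne j i with rfl | hne
      · rw [if_pos rfl, if_pos rfl, mul_one]
      · rw [if_neg (fun h => hne (Subtype.ext h)), if_neg hne, mul_zero]
    rw [Finset.sum_congr rfl (fun j _ => h1 j)]
    simp
  have hquadU : ∀ v ∈ U, v ≠ 0 → v ⬝ᵥ (M *ᵥ v) < lam * (v ⬝ᵥ v) := by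
    intro v hv hv0
    rw [hU, Submodule.mem_span_range_iff_exists_fun] at hv
    obtain ⟨c, hc⟩ := hv
    have hMv : M *ᵥ v = ∑ i : ↥S, (c i * ν ↑i) • uvec ↑i := by
      rw [← hc, mulVec_sum']
      exact Finset.sum_congr rfl fun i _ => by
        rw [Matrix.mulVec_smul, hmv ↑i, smul_smul]
    have hvMv : v ⬝ᵥ (M *ᵥ v) = ∑ i : ↥S, ν ↑i * c i ^ 2 := by
      rw [hMv, dotProduct_sum']
      refine Finset.sum_congr rfl fun i _ => ?_
      rw [dotProduct_smul, smul_eq_mul, ← hc, hvdot c i]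
      ring
    have hvv : v ⬝ᵥ v = ∑ i : ↥S, c i ^ 2 := by
      rw [← hc]
      rw [dotProduct_sum']
      refine Finset.sum_congr rfl fun i _ => ?_
      rw [dotProduct_smul, smul_eq_mul, hvdot c i]
      ring
    rw [hvMv, hvv, Finset.mul_sum]
    have hex : ∃ i : ↥S, c i ≠ 0 := by
      by_contra hall
      push_neg at hall
      apply hv0
      rw [← hc]
      simp [hall]
    obtain ⟨i0, hi0⟩ := hex
    have hlt : ∀ i : ↥S, ν ↑i < lam := by
      intro i
      exact (Finset.mem_filter.mp i.2).2
    apply Finset.sum_lt_sum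
    · intro i _
      nlinarith [sq_nonneg (c i), hlt i]
    · refine ⟨i0, Finset.mem_univ _, ?_⟩
      have : 0 < c i0 ^ 2 := by positivity
      nlinarith [hlt i0]
  have hWsupp : ∀ v ∈ W, ∀ y : Fin n, y ∉ T → v y = 0 := by
    intro v hv
    rw [hW] at hv
    induction hv using Submodule.span_induction with
    | mem z hz =>
      obtain ⟨x, rfl⟩ := hz
      intro y hy
      exact Pi.single_eq_of_ne (fun h => hy (by rw [h]; exact x.2)) 1
    | zero => intro y _; rfl
    | add a b _ _ ha hb => intro y hy; simp [Pi.add_apply, ha y hy, hb y hy]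
    | smul r a _ ha => intro y hy; simp [Pi.smul_apply, ha y hy]
  have hquadW : ∀ v ∈ W, lam * (v ⬝ᵥ v) ≤ v ⬝ᵥ (M *ᵥ v) := by
    intro v hv
    have hsupp := hWsupp v hv
    have hrow : ∀ x ∈ T, (M *ᵥ v) x = M x x * v x := by
      intro x hx
      show (∑ y, M x y * v y) = M x x * v x
      rw [← Finset.sum_subset (Finset.subset_univ T) (fun y _ hy => by
        rw [hsupp y hy, mul_zero])]
      exact Finset.sum_eq_single x (fun y hy hyx => by
        rw [hoff x hx y hy (fun h => hyx (h.symm ▸ rfl)), zero_mul]) (fun h => absurd hx h)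
    have hvMv : v ⬝ᵥ (M *ᵥ v) = ∑ x ∈ T, M x x * v x ^ 2 := by
      show (∑ x, v x * (M *ᵥ v) x) = _
      rw [← Finset.sum_subset (Finset.subset_univ T) (fun y _ hy => by
        rw [hsupp y hy, zero_mul])]
      refine Finset.sum_congr rfl fun x hx => ?_
      rw [hrow x hx]
      ring
    have hvv : v ⬝ᵥ v = ∑ x ∈ T, v x ^ 2 := by
      show (∑ x, v x * v x) = _
      rw [← Finset.sum_subset (Finset.subset_univ T) (fun y _ hy => by
        rw [hsupp y hy, zero_mul])]
      exact Finset.sum_congr rfl fun x _ => by ring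
    rw [hvMv, hvv, Finset.mul_sum]
    apply Finset.sum_le_sum
    intro x hx
    nlinarith [sq_nonneg (v x), hdiag x hx]
  have hdisj : U ⊓ W = ⊥ := by
    rw [Submodule.eq_bot_iff]
    intro v hv
    by_contra hv0
    exact absurd (hquadW v hv.2) (not_le.mpr (hquadU v hv.1 hv0))
  have h1 : Module.finrank ℝ U = S.card := by
    rw [hU, finrank_span_eq_card hUli, Fintype.card_coe]
  have h2 : Module.finrank ℝ W = T.card := by
    rw [hW, finrank_span_eq_card hWli, Fintype.card_coe]
  have h3 := Submodule.finrank_sup_add_finrank_inf_eq U W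
  rw [hdisj] at h3
  have h4 : Module.finrank ℝ (U ⊔ W : Submodule ℝ (Fin n → ℝ)) ≤ n := by
    have := Submodule.finrank_le (U ⊔ W : Submodule ℝ (Fin n → ℝ))
    rwa [Module.finrank_fin_fun] at this
  simp only [finrank_bot, add_zero] at h3
  omega
lemma exists_last_step {α : Type*} {S : α → α → Prop} {x : α} :
    ∀ (l : List α), 2 ≤ l.length → l.Chain' S → l.getLast? = some x → ∃ u, S u x := by
  intro l
  induction l with
  | nil => simp
  | cons a t ih =>
    cases t with
    | nil => simp
    | cons b t' =>
      intro _ hc hl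
      simp only [List.Chain', List.isChain_cons_cons] at hc
      cases t' with
      | nil =>
        have hb : b = x := by simpa using hl
        exact ⟨a, hb ▸ hc.1⟩
      | cons c t'' =>
        exact ih (by simp) hc.2 (by simpa using hl)

lemma chain_confine {α : Type*} {S : α → α → Prop} {P : α → Prop}
    (hstep : ∀ u v, S u v → P v → P u) :
    ∀ (l : List α) (x : α), l.Chain' S → l.getLast? = some x → P x → ∀ z ∈ l, P z := by
  intro l
  induction l with
  | nil => simp
  | cons a t ih =>
    intro x hc hl hx z hz
    cases t with
    | nil =>
      have : a = x := by simpa using hl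
      rcases List.mem_singleton.mp hz with rfl
      exact this ▸ hx
    | cons b t' =>
      simp only [List.Chain', List.isChain_cons_cons] at hc
      have hall : ∀ z ∈ b :: t', P z := by
        intro z hz
        exact ih x hc.2 (by simpa using hl) hx z hz
      rcases List.mem_cons.mp hz with rfl | hz'
      · exact hstep z b hc.1 (hall b (List.mem_cons_self))
      · exact hall z hz'

theorem stmt_19 (n : ℕ) (M : Matrix (Fin n) (Fin n) ℝ) (hM : M.IsSymm)
    (G : SimpleGraph (Fin n)) (σ : Fin n → Fin n → ℝ)
    (hσ : IsSignature G σ) (hcompat : Compatible M G σ)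
    (μ : Fin n → ℝ) (hmono : Monotone μ)
    (hchar : M.charpoly = ∏ i, (Polynomial.X - Polynomial.C (μ i)))
    (k : Fin n) (hsep : ∀ j, j < k → μ j < μ k)
    (f : Fin n → ℝ) (hf : f ≠ 0) (heig : M.mulVec f = μ k • f)
    (vl : ℕ) (hvl : vl = Nat.card {x : Fin n | Nat.card (G.neighborSet x) = 1})
    (zl : ℕ) (hzl : zl = Nat.card {x : Fin n |
      Nat.card (G.neighborSet x) = 1 ∧ f x = 0})
    (zr : ℕ) (hzr : zr = Nat.card {x : Fin n |
      Nat.card (G.neighborSet x) = 1 ∧ f x ≠ 0 ∧ ∀ y, G.Adj x y → f y = 0}) :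
    (k : ℕ) + 1 + vl + zr ≤ numStrong G σ f + 1 + n + zl := by
  classical
  set lam := μ k with hlam
  -- symmetry facts
  have hMs : ∀ x y, M x y = M y x := fun x y => hM.apply y x
  have hHerm : M.IsHermitian := by
    unfold Matrix.IsHermitian
    ext i j
    rw [Matrix.conjTranspose_apply]
    simp [hMs i j]
  -- leaf and neighbor machinery
  set Leaf : Fin n → Prop := fun x => Nat.card (G.neighborSet x) = 1 with hLeaf
  have hnbr : ∀ x, Leaf x → ∃ y, G.Adj x y ∧ ∀ z, G.Adj x z → z = y := by
    intro x hx
    have h1 := Nat.card_eq_one_iff_unique.mp hx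
    obtain ⟨⟨y, hy⟩⟩ := h1.2
    refine ⟨y, hy, fun z hz => ?_⟩
    have := h1.1.allEq ⟨z, hz⟩ ⟨y, hy⟩
    exact congrArg Subtype.val this
  set nb : Fin n → Fin n := fun x => if h : Leaf x then (hnbr x h).choose else x with hnb
  have nb_adj : ∀ x, Leaf x → G.Adj x (nb x) := by
    intro x hx
    rw [hnb]
    simp only [dif_pos hx]
    exact (hnbr x hx).choose_spec.1
  have nb_uniq : ∀ x, Leaf x → ∀ z, G.Adj x z → z = nb x := by
    intro x hx z hz
    rw [hnb]
    simp only [dif_pos hx]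
    exact (hnbr x hx).choose_spec.2 z hz
  have nb_ne : ∀ x, Leaf x → x ≠ nb x := fun x hx => (nb_adj x hx).ne
  -- edge facts
  have hMedge : ∀ x y, G.Adj x y → M x y ≠ 0 := fun x y h => ((hcompat.1 x y).mp h).2
  have hsign : ∀ x y, G.Adj x y → (0 < f x * σ x y * f y ↔ M x y * (f x * f y) < 0) := by
    intro x y h
    have hm := hMedge x y h
    have habs : 0 < |M x y| := abs_pos.mpr hm
    rw [hcompat.2 x y h]
    have heq : f x * -(M x y / |M x y|) * f y = -(M x y * (f x * f y)) / |M x y| := by ring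
    rw [heq, div_pos_iff]
    constructor
    · rintro (⟨h1, _⟩ | ⟨_, h2⟩)
      · linarith
      · linarith
    · intro h1
      exact Or.inl ⟨by linarith, habs⟩
  -- eigen equation at a leaf
  have hrow : ∀ x, Leaf x → M x x * f x + M x (nb x) * f (nb x) = lam * f x := by
    intro x hx
    have h0 : (M.mulVec f) x = (lam • f) x := congrFun heig x
    have h1 : ∑ y, M x y * f y = lam * f x := by
      simpa [Matrix.mulVec, dotProduct] using h0
    have hxn : x ≠ nb x := nb_ne x hx
    rw [← h1]
    rw [← Finset.sum_subset (Finset.subset_univ {x, nb x}) ?van, Finset.sum_pair hxn]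
    case van =>
      intro y _ hy
      have hMxy : M x y = 0 := by
        by_contra hMxy
        have hne : x ≠ y := fun h => hy (by simp [← h])
        have hadj : G.Adj x y := (hcompat.1 x y).mpr ⟨hne, hMxy⟩
        exact hy (by simp [nb_uniq x hx y hadj])
      rw [hMxy, zero_mul]
  -- the finsets
  set L0 : Finset (Fin n) := Finset.univ.filter (fun x => Leaf x ∧ f x = 0) with hL0
  set LZ : Finset (Fin n) := Finset.univ.filter
    (fun x => Leaf x ∧ f x ≠ 0 ∧ ∀ y, G.Adj x y → f y = 0) with hLZ
  set LB : Finset (Fin n) := Finset.univ.filter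
    (fun x => Leaf x ∧ f x ≠ 0 ∧ f (nb x) ≠ 0 ∧ 0 < M x (nb x) * (f x * f (nb x))) with hLB
  set LG : Finset (Fin n) := Finset.univ.filter
    (fun x => Leaf x ∧ f x ≠ 0 ∧ f (nb x) ≠ 0 ∧ M x (nb x) * (f x * f (nb x)) < 0) with hLG
  set R : Finset (Fin n) := LG.filter (fun x => Leaf (nb x) ∧ x < nb x) with hR
  set T : Finset (Fin n) := LZ ∪ (LG \ R) with hT
  -- membership unfolding helpers
  have hLZ_nb : ∀ x ∈ LZ, f (nb x) = 0 := by
    intro x hx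
    rw [hLZ, Finset.mem_filter] at hx
    exact hx.2.2.2 (nb x) (nb_adj x hx.2.1)
  -- Nat.card to Finset.card
  have cardset : ∀ (p : Fin n → Prop) (inst : DecidablePred p),
      Nat.card {x : Fin n | p x} = (@Finset.filter _ p inst Finset.univ).card := by
    intro p inst
    rw [Nat.card_coe_set_eq]
    have hps : {x : Fin n | p x} = ↑(@Finset.filter _ p inst Finset.univ) := by
      ext x
      simp
    rw [hps, Set.ncard_coe_finset]
  -- card identities
  have hvl' : vl = (Finset.univ.filter Leaf).card := by rw [hvl]; exact cardset _ _
  have hzl' : zl = L0.card := by rw [hzl]; exact cardset _ _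
  have hzr' : zr = LZ.card := by rw [hzr]; exact cardset _ _
  have hLG_props : ∀ x ∈ LG, Leaf x ∧ f x ≠ 0 ∧ f (nb x) ≠ 0 ∧ M x (nb x) * (f x * f (nb x)) < 0 := by
    intro x hx
    rw [hLG, Finset.mem_filter] at hx
    exact hx.2
  have hLB_props : ∀ x ∈ LB, Leaf x ∧ f x ≠ 0 ∧ f (nb x) ≠ 0 ∧ 0 < M x (nb x) * (f x * f (nb x)) := by
    intro x hx
    rw [hLB, Finset.mem_filter] at hx
    exact hx.2
  have hLZ_props : ∀ x ∈ LZ, Leaf x ∧ f x ≠ 0 ∧ ∀ y, G.Adj x y → f y = 0 := by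
    intro x hx
    rw [hLZ, Finset.mem_filter] at hx
    exact hx.2
  -- partition of leaves
  have hunion : Finset.univ.filter Leaf = L0 ∪ (LZ ∪ (LB ∪ LG)) := by
    ext x
    simp only [hL0, hLZ, hLB, hLG, Finset.mem_union, Finset.mem_filter, Finset.mem_univ, true_and]
    constructor
    · intro hx
      by_cases h0 : f x = 0
      · exact Or.inl ⟨hx, h0⟩
      · by_cases h1 : f (nb x) = 0
        · exact Or.inr (Or.inl ⟨hx, h0, fun y hy => by rw [nb_uniq x hx y hy]; exact h1⟩)
        · have hm : M x (nb x) ≠ 0 := hMedge x (nb x) (nb_adj x hx)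
          have hprod : M x (nb x) * (f x * f (nb x)) ≠ 0 :=
            mul_ne_zero hm (mul_ne_zero h0 h1)
          rcases hprod.lt_or_gt with hlt | hgt
          · exact Or.inr (Or.inr (Or.inr ⟨hx, h0, h1, hlt⟩))
          · exact Or.inr (Or.inr (Or.inl ⟨hx, h0, h1, hgt⟩))
    · rintro (⟨hx, -⟩ | ⟨hx, -⟩ | ⟨hx, -⟩ | ⟨hx, -⟩) <;> exact hx
  have d3 : Disjoint LB LG := by
    rw [Finset.disjoint_left]
    intro x hx hx'
    have h1 := (hLB_props x hx).2.2.2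
    have h2 := (hLG_props x hx').2.2.2
    linarith
  have d2 : Disjoint LZ (LB ∪ LG) := by
    rw [Finset.disjoint_left]
    intro x hx hx'
    have h1 := hLZ_nb x hx
    rcases Finset.mem_union.mp hx' with h | h
    · exact (hLB_props x h).2.2.1 h1
    · exact (hLG_props x h).2.2.1 h1
  have d1 : Disjoint L0 (LZ ∪ (LB ∪ LG)) := by
    rw [Finset.disjoint_left]
    intro x hx hx'
    rw [hL0, Finset.mem_filter] at hx
    rcases Finset.mem_union.mp hx' with h | h
    · exact (hLZ_props x h).2.1 hx.2.2
    · rcases Finset.mem_union.mp h with h' | h'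
      · exact (hLB_props x h').2.1 hx.2.2
      · exact (hLG_props x h').2.1 hx.2.2
  have hLpart : (Finset.univ.filter Leaf).card = L0.card + (LZ.card + (LB.card + LG.card)) := by
    rw [hunion, Finset.card_union_of_disjoint d1, Finset.card_union_of_disjoint d2,
      Finset.card_union_of_disjoint d3]
  -- T structure
  have hRsub : R ⊆ LG := by rw [hR]; exact Finset.filter_subset _ _
  have hTd : Disjoint LZ (LG \ R) := by
    rw [Finset.disjoint_left]
    intro x hx hx'
    exact (hLG_props x (Finset.mem_sdiff.mp hx').1).2.2.1 (hLZ_nb x hx)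
  have hTcard : T.card = LZ.card + (LG \ R).card := by
    rw [hT, Finset.card_union_of_disjoint hTd]
  have hgsplit : (LG \ R).card + R.card = LG.card := Finset.card_sdiff_add_card_eq_card hRsub
  -- facts about T
  have hTfacts : ∀ x ∈ T, Leaf x ∧ f x ≠ 0 := by
    intro x hx
    rcases Finset.mem_union.mp hx with h | h
    · exact ⟨(hLZ_props x h).1, (hLZ_props x h).2.1⟩
    · have := hLG_props x (Finset.mem_sdiff.mp h).1
      exact ⟨this.1, this.2.1⟩
  have hdiagT : ∀ x ∈ T, lam ≤ M x x := by
    intro x hx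
    rcases Finset.mem_union.mp hx with h | h
    · obtain ⟨hleaf, hfx, hall⟩ := hLZ_props x h
      have h1 := hrow x hleaf
      rw [hLZ_nb x h, mul_zero, add_zero] at h1
      have h2 : (M x x - lam) * f x = 0 := by linarith
      rcases mul_eq_zero.mp h2 with h3 | h3
      · linarith
      · exact absurd h3 hfx
    · obtain ⟨hleaf, hfx, hfnb, hneg⟩ := hLG_props x (Finset.mem_sdiff.mp h).1
      have h1 := hrow x hleaf
      have h3 : (M x x - lam) * (f x * f x) = -(M x (nb x) * (f x * f (nb x))) := by
        linear_combination f x * h1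
      nlinarith [mul_self_pos.mpr hfx]
  have hoffT : ∀ x ∈ T, ∀ y ∈ T, x ≠ y → M x y = 0 := by
    intro x hx y hy hne
    by_contra hMxy
    have hadj : G.Adj x y := (hcompat.1 x y).mpr ⟨hne, hMxy⟩
    have hynb : y = nb x := nb_uniq x (hTfacts x hx).1 y hadj
    have hxnb : x = nb y := nb_uniq y (hTfacts y hy).1 x hadj.symm
    rcases Finset.mem_union.mp hx with h | h
    · exact (hTfacts y hy).2 ((hLZ_props x h).2.2 y hadj)
    · rcases Finset.mem_union.mp hy with h' | h'
      · exact (hTfacts x hx).2 ((hLZ_props y h').2.2 x hadj.symm)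
      · have hxR := (Finset.mem_sdiff.mp h).2
        have hyR := (Finset.mem_sdiff.mp h').2
        rw [hR, Finset.mem_filter] at hxR hyR
        have hxlt : ¬ x < nb x := by
          intro hlt
          exact hxR ⟨(Finset.mem_sdiff.mp h).1, (by rw [← hynb]; exact (hTfacts y hy).1), hlt⟩
        have hylt : ¬ y < nb y := by
          intro hlt
          exact hyR ⟨(Finset.mem_sdiff.mp h').1, (by rw [← hxnb]; exact (hTfacts x hx).1), hlt⟩
        rw [← hynb] at hxlt
        rw [← hxnb] at hylt
        exact hne (le_antisymm (not_lt.mp hylt) (not_lt.mp hxlt))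
  -- spectral count
  have hkle : (k : ℕ) ≤ (Finset.univ.filter (fun j => μ j < lam)).card := by
    have hsub2 : Finset.Iio k ⊆ Finset.univ.filter (fun j => μ j < lam) := by
      intro j hj
      exact Finset.mem_filter.mpr ⟨Finset.mem_univ _, hsep j (Finset.mem_Iio.mp hj)⟩
    calc (k : ℕ) = (Finset.Iio k).card := (Fin.card_Iio k).symm
      _ ≤ _ := Finset.card_le_card hsub2
  have hcount : (k : ℕ) + T.card ≤ n := by
    have := count_lt_le M hHerm μ hchar lam T hdiagT hoffT
    omega
  -- strong nodal domain counting
  have hsingle : ∀ x, x ∈ LZ ∪ LB → strongClass G σ f x = {x} := by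
    intro x hx
    have hleaf : Leaf x := by
      rcases Finset.mem_union.mp hx with h | h
      · exact (hLZ_props x h).1
      · exact (hLB_props x h).1
    have hfx : f x ≠ 0 := by
      rcases Finset.mem_union.mp hx with h | h
      · exact (hLZ_props x h).2.1
      · exact (hLB_props x h).2.1
    apply Set.eq_of_subset_of_subset
    · rintro z ⟨hz, rfl | hconn⟩
      · rfl
      · exfalso
        obtain ⟨l, hlen, hchain, hhead, hlast⟩ := hconn
        obtain ⟨u, hadj, hpos⟩ := exists_last_step l hlen hchain hlast
        have hu_nb : u = nb x := nb_uniq x hleaf u hadj.symm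
        rcases Finset.mem_union.mp hx with h | h
        · have hfu : f u = 0 := (hLZ_props x h).2.2 u hadj.symm
          rw [hfu] at hpos
          simp at hpos
        · have hBp := (hLB_props x h).2.2.2
          have hs := (hsign u x hadj).mp hpos
          have heq2 : M u x * (f u * f x) = M x (nb x) * (f x * f (nb x)) := by
            rw [hu_nb, hMs (nb x) x]
            ring
          rw [heq2] at hs
          linarith
    · intro z hz
      rw [Set.mem_singleton_iff] at hz
      subst hz
      exact ⟨hfx, Or.inl rfl⟩
  have hR_props : ∀ x ∈ R, Leaf (nb x) ∧ x < nb x := by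
    intro x hx
    rw [hR, Finset.mem_filter] at hx
    exact hx.2
  have hpairmem : ∀ x ∈ R, nb x ∈ strongClass G σ f x := by
    intro x hx
    have hG := hLG_props x (hRsub hx)
    have hleaf := hG.1
    refine ⟨hG.2.2.1, Or.inr ?_⟩
    refine ⟨[nb x, x], by simp, ?_, by simp, by simp⟩
    simp only [List.Chain', List.isChain_cons_cons]
    refine ⟨⟨(nb_adj x hleaf).symm, ?_⟩, List.isChain_singleton x⟩
    rw [hsign (nb x) x (nb_adj x hleaf).symm]
    have heq2 : M (nb x) x * (f (nb x) * f x) = M x (nb x) * (f x * f (nb x)) := by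
      rw [hMs (nb x) x]
      ring
    rw [heq2]
    exact hG.2.2.2
  have hpairsub : ∀ x ∈ R, strongClass G σ f x ⊆ {x, nb x} := by
    intro x hxR z hz
    have hG := hLG_props x (hRsub hxR)
    have hleaf := hG.1
    have hleaf' := (hR_props x hxR).1
    have hnbnb : x = nb (nb x) := nb_uniq (nb x) hleaf' x (nb_adj x hleaf).symm
    obtain ⟨hz0, rfl | hconn⟩ := hz
    · exact Set.mem_insert _ _
    · obtain ⟨l, hlen, hchain, hhead, hlast⟩ := hconn
      have hstep : ∀ u v, SWalkStep G σ f u v → (v = x ∨ v = nb x) → (u = x ∨ u = nb x) := by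
        rintro u v ⟨hadj, -⟩ (rfl | rfl)
        · exact Or.inr (nb_uniq v hleaf u hadj.symm)
        · left
          rw [hnbnb]
          exact nb_uniq (nb x) hleaf' u hadj.symm
      have hzl : z ∈ l := List.mem_of_mem_head? (by rw [hhead]; rfl)
      have hPz := chain_confine hstep l x hchain hlast (Or.inl rfl) z hzl
      rcases hPz with rfl | rfl
      · exact Set.mem_insert _ _
      · exact Set.mem_insert_of_mem _ rfl
  set Dset : Finset (Fin n) := (LZ ∪ LB) ∪ R with hDset
  have hDfx : ∀ x ∈ Dset, f x ≠ 0 := by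
    intro x hx
    rcases Finset.mem_union.mp hx with h | h
    · rcases Finset.mem_union.mp h with h' | h'
      · exact (hLZ_props x h').2.1
      · exact (hLB_props x h').2.1
    · exact (hLG_props x (hRsub h)).2.1
  have hDdisj : Disjoint (LZ ∪ LB) R := by
    rw [Finset.disjoint_left]
    intro x hx hxR
    have hxG := hRsub hxR
    rcases Finset.mem_union.mp hx with h | h
    · exact (hLG_props x hxG).2.2.1 (hLZ_nb x h)
    · have h1 := (hLB_props x h).2.2.2
      have h2 := (hLG_props x hxG).2.2.2
      linarith
  have hZBdisj : Disjoint LZ LB := d2.mono_right Finset.subset_union_left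
  have hDcard : Dset.card = LZ.card + LB.card + R.card := by
    rw [hDset, Finset.card_union_of_disjoint hDdisj, Finset.card_union_of_disjoint hZBdisj]
  have hinj : Set.InjOn (strongClass G σ f) ↑Dset := by
    intro x hx y hy hxy
    by_contra hne
    rw [Finset.mem_coe] at hx hy
    rcases Finset.mem_union.mp hx with h | h
    · rcases Finset.mem_union.mp hy with h' | h'
      · rw [hsingle x h, hsingle y h'] at hxy
        exact hne (Set.singleton_eq_singleton_iff.mp hxy)
      · -- x singleton, y pair
        have h1 : y ∈ strongClass G σ f y := ⟨hDfx y hy, Or.inl rfl⟩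
        have h2 := hpairmem y h'
        rw [← hxy, hsingle x h] at h1 h2
        rw [Set.mem_singleton_iff] at h1 h2
        exact (nb_ne y (hLG_props y (hRsub h')).1) (h1.trans h2.symm)
    · rcases Finset.mem_union.mp hy with h' | h'
      · have h1 : x ∈ strongClass G σ f x := ⟨hDfx x hx, Or.inl rfl⟩
        have h2 := hpairmem x h
        rw [hxy, hsingle y h'] at h1 h2
        rw [Set.mem_singleton_iff] at h1 h2
        exact (nb_ne x (hLG_props x (hRsub h)).1) (h1.trans h2.symm)
      · -- both pairs
        have h1 : x ∈ strongClass G σ f x := ⟨hDfx x hx, Or.inl rfl⟩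
        rw [hxy] at h1
        rcases hpairsub y h' h1 with h2 | h2
        · exact hne h2
        · rw [Set.mem_singleton_iff] at h2
          have hyx : y = nb x := by
            have hadjyx : G.Adj y x := by
              rw [h2]
              exact nb_adj y (hLG_props y (hRsub h')).1
            exact nb_uniq x (hLG_props x (hRsub h)).1 y hadjyx.symm
          have hx1 := (hR_props x h).2
          have hy1 := (hR_props y h').2
          rw [← hyx] at hx1
          rw [← h2] at hy1
          exact absurd hx1 (asymm hy1)
  have hdom : LZ.card + LB.card + R.card ≤ numStrong G σ f := by
    have hsub : strongClass G σ f '' ↑Dset ⊆ strongDomains G σ f := by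
      rintro D ⟨x, hx, rfl⟩
      exact ⟨x, hDfx x (Finset.mem_coe.mp hx), rfl⟩
    calc LZ.card + LB.card + R.card = Dset.card := hDcard.symm
      _ = (↑Dset : Set (Fin n)).ncard := (Set.ncard_coe_finset _).symm
      _ = (strongClass G σ f '' ↑Dset).ncard := (Set.ncard_image_of_injOn hinj).symm
      _ ≤ (strongDomains G σ f).ncard := Set.ncard_le_ncard hsub (Set.toFinite _)
      _ = numStrong G σ f := (Nat.card_coe_set_eq _).symm
  omega
end
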